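/- The reducibility predicate is closed under β-conversion of the subject: if Γ ⊨_S M : A and Γ ⊢ M' : A in λS* and M ≡_β M', then Γ ⊨_S M' : A. -/

import Mathlib

/-- Terms of a generic λ-calculus with sorts `S` and constants `C` (de Bruijn indices). -/
inductive Tm (S : Type) (C : Type) : Type
  | sort : S → Tm S C
  | const : C → Tm S C
  | var : Nat → Tm S C
  | app : Tm S C → Tm S C → Tm S C
  | lam : Tm S C → Tm S C → Tm S C
  | pi : Tm S C → Tm S C → Tm S C

namespace Tm
variable {S C : Type}

/-- Lifting of de Bruijn indices ≥ k by d. -/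
def lift (d k : Nat) : Tm S C → Tm S C
  | sort s => sort s
  | const c => const c
  | var i => if i < k then var i else var (i + d)
  | app m n => app (m.lift d k) (n.lift d k)
  | lam a m => lam (a.lift d k) (m.lift d (k+1))
  | pi a b => pi (a.lift d k) (b.lift d (k+1))

/-- Substitution of variable k by N. -/
def subst (k : Nat) (N : Tm S C) : Tm S C → Tm S C
  | sort s => sort s
  | const c => const c
  | var i => if i < k then var i else if i = k then N.lift k 0 else var (i-1)
  | app m n => app (subst k N m) (subst k N n)
  | lam a m => lam (subst k N a) (subst (k+1) N m)
  | pi a b => pi (subst k N a) (subst (k+1) N b)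

/-- Lifting a simultaneous substitution under a binder. -/
def upσ (σ : Nat → Tm S C) : Nat → Tm S C
  | 0 => var 0
  | i+1 => (σ i).lift 1 0

/-- Simultaneous substitution. -/
def msubst (σ : Nat → Tm S C) : Tm S C → Tm S C
  | sort s => sort s
  | const c => const c
  | var i => σ i
  | app m n => app (m.msubst σ) (n.msubst σ)
  | lam a m => lam (a.msubst σ) (m.msubst (upσ σ))
  | pi a b => pi (a.msubst σ) (b.msubst (upσ σ))

end Tm

/-- A rewrite rule [Δ] l ↝ r. -/
abbrev Rule (S C : Type) := List (Tm S C) × Tm S C × Tm S C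

/-- One-step βR-reduction (contextual closure of β together with rules of R). -/
inductive Step {S C : Type} (R : Rule S C → Prop) : Tm S C → Tm S C → Prop
  | beta {A M N} : Step R (.app (.lam A M) N) (Tm.subst 0 N M)
  | rew {Δ l r} (σ : Nat → Tm S C) : R (Δ, l, r) → Step R (l.msubst σ) (r.msubst σ)
  | appL {M M' N} : Step R M M' → Step R (.app M N) (.app M' N)
  | appR {M N N'} : Step R N N' → Step R (.app M N) (.app M N')
  | lamA {A A' M} : Step R A A' → Step R (.lam A M) (.lam A' M)
  | lamM {A M M'} : Step R M M' → Step R (.lam A M) (.lam A M')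
  | piA {A A' B} : Step R A A' → Step R (.pi A B) (.pi A' B)
  | piB {A B B'} : Step R B B' → Step R (.pi A B) (.pi A B')

/-- The empty rewrite system: pure β-reduction. -/
def NoRules {S C : Type} : Rule S C → Prop := fun _ => False

/-- Multistep reduction. -/
abbrev Red {S C : Type} (R : Rule S C → Prop) : Tm S C → Tm S C → Prop :=
  Relation.ReflTransGen (Step R)

/-- Conversion: smallest congruence containing the reduction. -/
abbrev Conv {S C : Type} (R : Rule S C → Prop) : Tm S C → Tm S C → Prop :=
  Relation.EqvGen (Step R)

/-- Pure β-reduction and conversion. -/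
abbrev BetaRed {S C : Type} : Tm S C → Tm S C → Prop := Red NoRules
abbrev BetaConv {S C : Type} : Tm S C → Tm S C → Prop := Conv NoRules

/-- Confluence of a relation. -/
def Confluent {X : Type} (r : X → X → Prop) : Prop :=
  ∀ a b c, Relation.ReflTransGen r a b → Relation.ReflTransGen r a c →
    ∃ d, Relation.ReflTransGen r b d ∧ Relation.ReflTransGen r c d

/-- A PTS specification: a set of sorts, axioms and rules. -/
structure Spec (S : Type) where
  sorts : Set S
  ax : S → S → Prop
  ru : S → S → S → Prop

/-- Functional specifications. -/
def Spec.Functional {S : Type} (sp : Spec S) : Prop :=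
  (∀ s₁ s₂ s₂', sp.ax s₁ s₂ → sp.ax s₁ s₂' → s₂ = s₂') ∧
  (∀ s₁ s₂ s₃ s₃', sp.ru s₁ s₂ s₃ → sp.ru s₁ s₂ s₃' → s₃ = s₃')

/-- Top-sorts: sorts with no axiom. -/
def Spec.TopSort {S : Type} (sp : Spec S) (s : S) : Prop :=
  s ∈ sp.sorts ∧ ¬ ∃ s', sp.ax s s'

mutual
/-- Well-formed contexts (generic typing, parametrized by a spec, a constant
signature with a validity predicate, and a rewrite system used in conversion). -/
inductive Wf {S C : Type} (sp : Spec S) (sig : C → Tm S C) (valid : C → Prop)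
    (R : Rule S C → Prop) : List (Tm S C) → Prop
  | nil : Wf sp sig valid R []
  | cons {Γ A s} : Typing sp sig valid R Γ A (.sort s) → Wf sp sig valid R (A :: Γ)

/-- Typing judgment Γ ⊢ M : A (conversion modulo βR). -/
inductive Typing {S C : Type} (sp : Spec S) (sig : C → Tm S C) (valid : C → Prop)
    (R : Rule S C → Prop) : List (Tm S C) → Tm S C → Tm S C → Prop
  | var {Γ i A} : Wf sp sig valid R Γ → Γ[i]? = some A →
      Typing sp sig valid R Γ (.var i) (A.lift (i+1) 0)
  | const {Γ c} : Wf sp sig valid R Γ → valid c →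
      Typing sp sig valid R Γ (.const c) (sig c)
  | sort {Γ s₁ s₂} : Wf sp sig valid R Γ → sp.ax s₁ s₂ →
      Typing sp sig valid R Γ (.sort s₁) (.sort s₂)
  | pi {Γ A B s₁ s₂ s₃} : Typing sp sig valid R Γ A (.sort s₁) →
      Typing sp sig valid R (A :: Γ) B (.sort s₂) → sp.ru s₁ s₂ s₃ →
      Typing sp sig valid R Γ (.pi A B) (.sort s₃)
  | lam {Γ A M B s} : Typing sp sig valid R (A :: Γ) M B →
      Typing sp sig valid R Γ (.pi A B) (.sort s) →
      Typing sp sig valid R Γ (.lam A M) (.pi A B)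
  | app {Γ M N A B} : Typing sp sig valid R Γ M (.pi A B) →
      Typing sp sig valid R Γ N A →
      Typing sp sig valid R Γ (.app M N) (Tm.subst 0 N B)
  | conv {Γ M A B s} : Typing sp sig valid R Γ M A →
      Typing sp sig valid R Γ B (.sort s) → Conv R A B →
      Typing sp sig valid R Γ M B
end

/-- Typing in a pure type system λS (no constants, no rewriting). -/
abbrev PTyping {S : Type} (sp : Spec S) :
    List (Tm S Empty) → Tm S Empty → Tm S Empty → Prop :=
  Typing sp (fun c => c.elim) (fun _ => False) NoRules

abbrev PWf {S : Type} (sp : Spec S) : List (Tm S Empty) → Prop :=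
  Wf sp (fun c => c.elim) (fun _ => False) NoRules

/-- The two sorts of the λΠ-calculus. -/
inductive LSort : Type
  | ty : LSort
  | kd : LSort

/-- The specification of the λΠ-calculus: Type : Kind, rules (Type,Type,Type),(Type,Kind,Kind). -/
def lpiSpec : Spec LSort where
  sorts := Set.univ
  ax s₁ s₂ := s₁ = .ty ∧ s₂ = .kd
  ru s₁ s₂ s₃ := s₁ = .ty ∧ ((s₂ = .ty ∧ s₃ = .ty) ∨ (s₂ = .kd ∧ s₃ = .kd))

/-- A rewrite rule is well-typed in the signature when both sides have a common type
in the plain λΠ-calculus (no rewriting) over that signature. -/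
def RuleWellTyped {C : Type} (sig : C → Tm LSort C) (valid : C → Prop)
    (ρ : Rule LSort C) : Prop :=
  ∃ A, Typing lpiSpec sig valid NoRules ρ.1 ρ.2.1 A ∧
       Typing lpiSpec sig valid NoRules ρ.1 ρ.2.2 A

/-- Well-formed signature: every constant's type is a λΠ type in the empty context. -/
def SigWellFormed {C : Type} (sig : C → Tm LSort C) (valid : C → Prop) : Prop :=
  ∀ c, valid c → ∃ s, Typing lpiSpec sig valid NoRules [] (sig c) (.sort s)

/-- Constants of the Cousineau–Dowek signature Σ_S. -/
inductive Const (S : Type) : Type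
  | u : S → Const S
  | eps : S → Const S
  | dot : S → S → Const S
  | pidot : S → S → S → Const S

/-- Types of the constants of Σ_S. -/
def sigS {S : Type} : Const S → Tm LSort (Const S)
  | .u _ => .sort .ty
  | .eps s => .pi (.const (.u s)) (.sort .ty)
  | .dot _ s₂ => .const (.u s₂)
  | .pidot s₁ s₂ s₃ =>
      .pi (.const (.u s₁))
        (.pi (.pi (.app (.const (.eps s₁)) (.var 0)) (.const (.u s₂))) (.const (.u s₃)))

/-- Valid constants of Σ_S (u_s, ε_s for sorts; ṡ₁ : u_{s₂} for axioms; π̇ for rules). -/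
def validS {S : Type} (sp : Spec S) : Const S → Prop
  | .u s => s ∈ sp.sorts
  | .eps s => s ∈ sp.sorts
  | .dot s₁ s₂ => sp.ax s₁ s₂
  | .pidot s₁ s₂ s₃ => sp.ru s₁ s₂ s₃

/-- The rewrite system R_S: ε_{s₂} ṡ₁ ↝ u_{s₁} and
ε_{s₃}(π̇_{s₁s₂s₃} A B) ↝ Πx:(ε_{s₁}A). ε_{s₂}(B x). -/
inductive RS {S : Type} (sp : Spec S) : Rule LSort (Const S) → Prop
  | axRule {s₁ s₂} : sp.ax s₁ s₂ →
      RS sp ([], .app (.const (.eps s₂)) (.const (.dot s₁ s₂)), .const (.u s₁))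
  | piRule {s₁ s₂ s₃} : sp.ru s₁ s₂ s₃ →
      RS sp ([.pi (.app (.const (.eps s₁)) (.var 0)) (.const (.u s₂)), .const (.u s₁)],
             .app (.const (.eps s₃)) (.app (.app (.const (.pidot s₁ s₂ s₃)) (.var 1)) (.var 0)),
             .pi (.app (.const (.eps s₁)) (.var 1)) (.app (.const (.eps s₂)) (.app (.var 1) (.var 0))))

/-- Typing in λΠ/S. -/
abbrev LTyping {S : Type} (sp : Spec S) :
    List (Tm LSort (Const S)) → Tm LSort (Const S) → Tm LSort (Const S) → Prop :=
  Typing lpiSpec sigS (validS sp) (RS sp)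

abbrev LWf {S : Type} (sp : Spec S) : List (Tm LSort (Const S)) → Prop :=
  Wf lpiSpec sigS (validS sp) (RS sp)

mutual
/-- Forward translation of terms: |M|_Γ = M'. -/
inductive TrT {S : Type} (sp : Spec S) :
    List (Tm S Empty) → Tm S Empty → Tm LSort (Const S) → Prop
  | sort {Γ s s'} : sp.ax s s' → TrT sp Γ (.sort s) (.const (.dot s s'))
  | var {Γ i} : TrT sp Γ (.var i) (.var i)
  | app {Γ M M' N N'} : TrT sp Γ M M' → TrT sp Γ N N' →
      TrT sp Γ (.app M N) (.app M' N')
  | lam {Γ A A' M M'} : TrTy sp Γ A A' → TrT sp (A :: Γ) M M' →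
      TrT sp Γ (.lam A M) (.lam A' M')
  | pi {Γ A B s₁ s₂ s₃ A' A'' B'} : PTyping sp Γ A (.sort s₁) →
      PTyping sp (A :: Γ) B (.sort s₂) → sp.ru s₁ s₂ s₃ →
      TrT sp Γ A A' → TrTy sp Γ A A'' → TrT sp (A :: Γ) B B' →
      TrT sp Γ (.pi A B) (.app (.app (.const (.pidot s₁ s₂ s₃)) A') (.lam A'' B'))

/-- Forward translation of types: ‖A‖_Γ = A'. -/
inductive TrTy {S : Type} (sp : Spec S) :
    List (Tm S Empty) → Tm S Empty → Tm LSort (Const S) → Prop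
  | sort {Γ s} : TrTy sp Γ (.sort s) (.const (.u s))
  | pi {Γ A A' B B'} : TrTy sp Γ A A' → TrTy sp (A :: Γ) B B' →
      TrTy sp Γ (.pi A B) (.pi A' B')
  | el {Γ A s A'} : PTyping sp Γ A (.sort s) → TrT sp Γ A A' →
      TrTy sp Γ A (.app (.const (.eps s)) A')
end

/-- Forward translation of contexts ‖Γ‖. -/
inductive TrCtx {S : Type} (sp : Spec S) :
    List (Tm S Empty) → List (Tm LSort (Const S)) → Prop
  | nil : TrCtx sp [] []
  | cons {Γ Γ' A A'} : TrCtx sp Γ Γ' → TrTy sp Γ A A' → TrCtx sp (A :: Γ) (A' :: Γ')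

mutual
/-- Inverse translation of terms: φ(M) = M'. -/
inductive InvT {S : Type} : Tm LSort (Const S) → Tm S Empty → Prop
  | dot {s₁ s₂} : InvT (.const (.dot s₁ s₂)) (.sort s₁)
  | pidot {s₁ s₂ s₃} : InvT (.const (.pidot s₁ s₂ s₃))
      (.lam (.sort s₁) (.lam (.pi (.var 0) (.sort s₂))
        (.pi (.var 1) (.app (.var 1) (.var 0)))))
  | var {i} : InvT (.var i) (.var i)
  | app {M M' N N'} : InvT M M' → InvT N N' → InvT (.app M N) (.app M' N')
  | lam {A A' M M'} : InvTy A A' → InvT M M' → InvT (.lam A M) (.lam A' M')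

/-- Inverse translation of types: ψ(A) = A'. -/
inductive InvTy {S : Type} : Tm LSort (Const S) → Tm S Empty → Prop
  | u {s} : InvTy (.const (.u s)) (.sort s)
  | el {s M M'} : InvT M M' → InvTy (.app (.const (.eps s)) M) M'
  | pi {A A' B B'} : InvTy A A' → InvTy B B' → InvTy (.pi A B) (.pi A' B')
end

/-- Inverse translation of (object) contexts ψ(Γ). -/
inductive InvCtx {S : Type} : List (Tm LSort (Const S)) → List (Tm S Empty) → Prop
  | nil : InvCtx [] []
  | cons {Γ Γ' A A'} : InvCtx Γ Γ' → InvTy A A' → InvCtx (A :: Γ) (A' :: Γ')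

/-- The minimal completion S* of S: a fresh top-sort τ, axioms s:τ for the top-sorts
of S, and rules (s₁,s₂,τ) for all pairs having no rule. -/
def mc {S : Type} (sp : Spec S) (τ : S) : Spec S where
  sorts := insert τ sp.sorts
  ax s₁ s₂ := sp.ax s₁ s₂ ∨ (s₁ ∈ sp.sorts ∧ (¬ ∃ s, sp.ax s₁ s) ∧ s₂ = τ)
  ru s₁ s₂ s₃ := sp.ru s₁ s₂ s₃ ∨
      (s₁ ∈ insert τ sp.sorts ∧ s₂ ∈ insert τ sp.sorts ∧ (¬ ∃ s, sp.ru s₁ s₂ s) ∧ s₃ = τ)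

/-- S' is a completion of S. -/
def IsCompletion {S : Type} (sp sp' : Spec S) : Prop :=
  sp.sorts ⊆ sp'.sorts ∧
  (∀ s₁ s₂, sp.ax s₁ s₂ → sp'.ax s₁ s₂) ∧
  (∀ s₁ s₂ s₃, sp.ru s₁ s₂ s₃ → sp'.ru s₁ s₂ s₃) ∧
  (∀ s₁ ∈ sp.sorts, ∃ s₂, sp'.ax s₁ s₂) ∧
  (∀ s₁ ∈ sp'.sorts, ∀ s₂ ∈ sp'.sorts, ∃ s₃, sp'.ru s₁ s₂ s₃)

/-- Kind-level β-reduction in a λΠ-calculus modulo: contraction of a β-redex whose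
type has type Kind, under any context. -/
inductive KindStep {C : Type} (sig : C → Tm LSort C) (valid : C → Prop)
    (R : Rule LSort C → Prop) : List (Tm LSort C) → Tm LSort C → Tm LSort C → Prop
  | beta {Γ A M N T} :
      Typing lpiSpec sig valid R Γ (.app (.lam A M) N) T →
      Typing lpiSpec sig valid R Γ T (.sort .kd) →
      KindStep sig valid R Γ (.app (.lam A M) N) (Tm.subst 0 N M)
  | appL {Γ M M' N} : KindStep sig valid R Γ M M' →
      KindStep sig valid R Γ (.app M N) (.app M' N)
  | appR {Γ M N N'} : KindStep sig valid R Γ N N' →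
      KindStep sig valid R Γ (.app M N) (.app M N')
  | lamA {Γ A A' M} : KindStep sig valid R Γ A A' →
      KindStep sig valid R Γ (.lam A M) (.lam A' M)
  | lamM {Γ A M M'} : KindStep sig valid R (A :: Γ) M M' →
      KindStep sig valid R Γ (.lam A M) (.lam A M')
  | piA {Γ A A' B} : KindStep sig valid R Γ A A' →
      KindStep sig valid R Γ (.pi A B) (.pi A' B)
  | piB {Γ A B B'} : KindStep sig valid R (A :: Γ) B B' →
      KindStep sig valid R Γ (.pi A B) (.pi A B')

/-- A term with no Kind-level β-redexes (a λΠ⁻ term). -/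
def KindFree {C : Type} (sig : C → Tm LSort C) (valid : C → Prop)
    (R : Rule LSort C → Prop) (Γ : List (Tm LSort C)) (M : Tm LSort C) : Prop :=
  ∀ N, ¬ KindStep sig valid R Γ M N

/-- Object contexts of λΠ/S: every declared type has type Type. -/
def ObjCtx {S : Type} (sp : Spec S) (Γ : List (Tm LSort (Const S))) : Prop :=
  ∀ i A, Γ[i]? = some A → LTyping sp (Γ.drop (i+1)) A (.sort .ty)

/-- The τ-height measure ℋ_τ on Γ-types of λS*. -/
inductive Ht {S : Type} (sp : Spec S) (τ : S) :
    List (Tm S Empty) → Tm S Empty → Nat → Prop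
  | ntau {Γ A s} : PTyping (mc sp τ) Γ A (.sort s) → s ≠ τ → Ht sp τ Γ A 0
  | srt {Γ s'} : PTyping (mc sp τ) Γ (.sort s') (.sort τ) → Ht sp τ Γ (.sort s') 0
  | pi {Γ B C m n} : PTyping (mc sp τ) Γ (.pi B C) (.sort τ) →
      Ht sp τ Γ B m → Ht sp τ (B :: Γ) C n → Ht sp τ Γ (.pi B C) (max m n + 1)

/-- The reducibility predicate, stratified by the τ-height of the type. -/
def RedN {S : Type} (sp : Spec S) (τ : S) :
    Nat → List (Tm S Empty) → Tm S Empty → Tm S Empty → Prop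
  | n, Γ, M, A =>
    PWf sp Γ ∧ ∃ s, PTyping (mc sp τ) Γ M A ∧ PTyping (mc sp τ) Γ A (.sort s) ∧
      ((s ≠ τ ∨ ∃ s' ∈ sp.sorts, A = .sort s') →
        ∃ M' A', BetaRed M M' ∧ BetaRed A A' ∧ PTyping sp Γ M' A') ∧
      (s = τ → ∀ B C, A = .pi B C → ∀ N,
        (∀ m (hm : m < n), Ht sp τ Γ B m → RedN sp τ m Γ N B) →
        ∀ m (hm : m < n), Ht sp τ Γ (Tm.subst 0 N C) m →
          RedN sp τ m Γ (.app M N) (Tm.subst 0 N C))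
  termination_by n => n

/-- The reducibility predicate Γ ⊨_S M : A. -/
def Reducible {S : Type} (sp : Spec S) (τ : S)
    (Γ : List (Tm S Empty)) (M A : Tm S Empty) : Prop :=
  ∃ n, Ht sp τ Γ A n ∧ RedN sp τ n Γ M A


namespace Aux
open Tm

variable {S C : Type}

lemma lift_zero (M : Tm S C) (k : Nat) : M.lift 0 k = M := by
  induction M generalizing k <;> simp [Tm.lift, *]

lemma lift_lift_le {k k' d : Nat} (h1 : k ≤ k') (h2 : k' ≤ k + d) (M : Tm S C) (d' : Nat) :
    (M.lift d k).lift d' k' = M.lift (d + d') k := by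
  induction M generalizing k k' with
  | var i =>
      simp only [Tm.lift]
      split_ifs <;> (try simp only [Tm.lift]) <;> (try split_ifs) <;>
        first | rfl | (exfalso; omega) | (congr 1 <;> omega)
  | sort s => rfl
  | const c => rfl
  | app m n ih1 ih2 => simp only [Tm.lift]; rw [ih1 h1 h2, ih2 h1 h2]
  | lam a m ih1 ih2 =>
      simp only [Tm.lift]; rw [ih1 h1 h2, ih2 (by omega) (by omega)]
  | pi a b ih1 ih2 =>
      simp only [Tm.lift]; rw [ih1 h1 h2, ih2 (by omega) (by omega)]

lemma lift_lift_high {k k' : Nat} (h : k ≤ k') (M : Tm S C) (d d' : Nat) :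
    (M.lift d k).lift d' (k' + d) = (M.lift d' k').lift d k := by
  induction M generalizing k k' with
  | var i =>
      simp only [Tm.lift]
      split_ifs <;> (try simp only [Tm.lift]) <;> (try split_ifs) <;>
        first | rfl | (exfalso; omega) | (congr 1 <;> omega)
  | sort s => rfl
  | const c => rfl
  | app m n ih1 ih2 => simp only [Tm.lift]; rw [ih1 h, ih2 h]
  | lam a m ih1 ih2 =>
      simp only [Tm.lift]; rw [ih1 h, show k' + d + 1 = (k'+1) + d by omega,
        ih2 (by omega)]
  | pi a b ih1 ih2 =>
      simp only [Tm.lift]; rw [ih1 h, show k' + d + 1 = (k'+1) + d by omega,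
        ih2 (by omega)]

lemma lift_subst_low {j k : Nat} (h : j ≤ k) (M : Tm S C) (N : Tm S C) (d : Nat) :
    (Tm.subst k N M).lift d j = Tm.subst (k + d) N (M.lift d j) := by
  induction M generalizing j k with
  | var i =>
      simp only [Tm.lift, Tm.subst]
      split_ifs <;> (try simp only [Tm.lift, Tm.subst]) <;> (try split_ifs) <;>
        first
        | rfl | (exfalso; omega) | (congr 1 <;> omega)
        | (rw [lift_lift_le (Nat.zero_le _) (by omega)])
  | sort s => rfl
  | const c => rfl
  | app m n ih1 ih2 => simp only [Tm.lift, Tm.subst]; rw [ih1 h, ih2 h]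
  | lam a m ih1 ih2 =>
      simp only [Tm.lift, Tm.subst]; rw [ih1 h, show k + d + 1 = (k+1) + d by omega,
        ih2 (by omega)]
  | pi a b ih1 ih2 =>
      simp only [Tm.lift, Tm.subst]; rw [ih1 h, show k + d + 1 = (k+1) + d by omega,
        ih2 (by omega)]

lemma subst_lift_cancel {k j d : Nat} (h1 : k ≤ j) (h2 : j ≤ k + d) (M : Tm S C) (N : Tm S C) :
    Tm.subst j N (M.lift (d+1) k) = M.lift d k := by
  induction M generalizing k j with
  | var i =>
      simp only [Tm.lift, Tm.subst]
      split_ifs <;> (try simp only [Tm.lift, Tm.subst]) <;> (try split_ifs) <;>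
        first | rfl | (exfalso; omega) | (congr 1 <;> omega)
  | sort s => rfl
  | const c => rfl
  | app m n ih1 ih2 => simp only [Tm.lift, Tm.subst]; rw [ih1 h1 h2, ih2 h1 h2]
  | lam a m ih1 ih2 =>
      simp only [Tm.lift, Tm.subst]; rw [ih1 h1 h2, ih2 (by omega) (by omega)]
  | pi a b ih1 ih2 =>
      simp only [Tm.lift, Tm.subst]; rw [ih1 h1 h2, ih2 (by omega) (by omega)]

lemma lift_subst_high (M : Tm S C) (N : Tm S C) (j k d : Nat) :
    (Tm.subst j N M).lift d (k + j) = Tm.subst j (N.lift d k) (M.lift d (k + j + 1)) := by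
  induction M generalizing j with
  | var i =>
      simp only [Tm.lift, Tm.subst]
      split_ifs <;> (try simp only [Tm.lift, Tm.subst]) <;> (try split_ifs) <;>
        first
        | rfl | (exfalso; omega) | (congr 1 <;> omega)
        | (rw [← lift_lift_high (Nat.zero_le k)])
  | sort s => rfl
  | const c => rfl
  | app m n ih1 ih2 => simp only [Tm.lift, Tm.subst]; rw [ih1, ih2]
  | lam a m ih1 ih2 =>
      simp only [Tm.lift, Tm.subst]
      rw [ih1, show k + j + 1 = k + (j+1) by omega, ih2,
        show k + (j + 1) + 1 = k + j + 1 + 1 by omega]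
  | pi a b ih1 ih2 =>
      simp only [Tm.lift, Tm.subst]
      rw [ih1, show k + j + 1 = k + (j+1) by omega, ih2,
        show k + (j + 1) + 1 = k + j + 1 + 1 by omega]

lemma subst_subst (M : Tm S C) (N P : Tm S C) (j k : Nat) :
    Tm.subst (k + j) N (Tm.subst j P M) =
      Tm.subst j (Tm.subst k N P) (Tm.subst (k + j + 1) N M) := by
  induction M generalizing j with
  | var i =>
      simp only [Tm.subst]
      split_ifs <;> (try simp only [Tm.lift, Tm.subst]) <;> (try split_ifs) <;>
        first
        | rfl | (exfalso; omega) | (congr 1 <;> omega)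
        | (rw [← lift_subst_low (Nat.zero_le _)])
        | (rw [subst_lift_cancel (Nat.zero_le _) (by omega)])
  | sort s => rfl
  | const c => rfl
  | app m n ih1 ih2 => simp only [Tm.subst]; rw [ih1, ih2]
  | lam a m ih1 ih2 =>
      simp only [Tm.subst]
      rw [ih1, show k + j + 1 = k + (j+1) by omega, ih2,
        show k + (j + 1) + 1 = k + j + 1 + 1 by omega]
  | pi a b ih1 ih2 =>
      simp only [Tm.subst]
      rw [ih1, show k + j + 1 = k + (j+1) by omega, ih2,
        show k + (j + 1) + 1 = k + j + 1 + 1 by omega]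

end Aux
namespace Aux
open Tm Relation

variable {S C : Type}


/-- β-step without the (vacuous) rewrite constructor, for easy inversion. -/
inductive BStep : Tm S C → Tm S C → Prop
  | beta {A M N} : BStep (.app (.lam A M) N) (Tm.subst 0 N M)
  | appL {M M' N} : BStep M M' → BStep (.app M N) (.app M' N)
  | appR {M N N'} : BStep N N' → BStep (.app M N) (.app M N')
  | lamA {A A' M} : BStep A A' → BStep (.lam A M) (.lam A' M)
  | lamM {A M M'} : BStep M M' → BStep (.lam A M) (.lam A M')
  | piA {A A' B} : BStep A A' → BStep (.pi A B) (.pi A' B)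
  | piB {A B B'} : BStep B B' → BStep (.pi A B) (.pi A B')

lemma bstep_step {M N : Tm S C} (h : BStep M N) : Step NoRules M N := by
  induction h with
  | beta => exact Step.beta
  | appL _ ih => exact Step.appL ih
  | appR _ ih => exact Step.appR ih
  | lamA _ ih => exact Step.lamA ih
  | lamM _ ih => exact Step.lamM ih
  | piA _ ih => exact Step.piA ih
  | piB _ ih => exact Step.piB ih

lemma step_bstep {M N : Tm S C} (h : Step NoRules M N) : BStep M N := by
  induction h with
  | beta => exact BStep.beta
  | rew σ hr => exact hr.elim
  | appL _ ih => exact BStep.appL ih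
  | appR _ ih => exact BStep.appR ih
  | lamA _ ih => exact BStep.lamA ih
  | lamM _ ih => exact BStep.lamM ih
  | piA _ ih => exact BStep.piA ih
  | piB _ ih => exact BStep.piB ih

lemma step_lift {M M' : Tm S C} (h : Step NoRules M M') (d k : Nat) :
    Step NoRules (M.lift d k) (M'.lift d k) := by
  induction h generalizing k with
  | @beta A M N =>
      simp only [Tm.lift]
      have : (Tm.subst 0 N M).lift d k = Tm.subst 0 (N.lift d k) (M.lift d (k+1)) := by
        have := lift_subst_high M N 0 k d
        simpa using this
      rw [this]; exact Step.beta
  | rew σ hr => exact hr.elim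
  | appL _ ih => exact Step.appL (ih k)
  | appR _ ih => exact Step.appR (ih k)
  | lamA _ ih => exact Step.lamA (ih k)
  | lamM _ ih => exact Step.lamM (ih (k+1))
  | piA _ ih => exact Step.piA (ih k)
  | piB _ ih => exact Step.piB (ih (k+1))

lemma step_subst_left {M M' : Tm S C} (h : Step NoRules M M') (k : Nat) (N : Tm S C) :
    Step NoRules (Tm.subst k N M) (Tm.subst k N M') := by
  induction h generalizing k with
  | @beta A P Q =>
      simp only [Tm.subst]
      have : Tm.subst k N (Tm.subst 0 Q P)
          = Tm.subst 0 (Tm.subst k N Q) (Tm.subst (k+1) N P) := by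
        have := subst_subst P N Q 0 k
        simpa using this
      rw [this]; exact Step.beta
  | rew σ hr => exact hr.elim
  | appL _ ih => exact Step.appL (ih k)
  | appR _ ih => exact Step.appR (ih k)
  | lamA _ ih => exact Step.lamA (ih k)
  | lamM _ ih => exact Step.lamM (ih (k+1))
  | piA _ ih => exact Step.piA (ih k)
  | piB _ ih => exact Step.piB (ih (k+1))

lemma red_map {f : Tm S C → Tm S C}
    (hf : ∀ a b, Step NoRules a b → Step NoRules (f a) (f b)) {a b : Tm S C}
    (h : BetaRed a b) : BetaRed (f a) (f b) := by
  induction h with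
  | refl => exact ReflTransGen.refl
  | tail _ hs ih => exact ih.tail (hf _ _ hs)

lemma conv_map {f : Tm S C → Tm S C}
    (hf : ∀ a b, Step NoRules a b → Step NoRules (f a) (f b)) {a b : Tm S C}
    (h : BetaConv a b) : BetaConv (f a) (f b) := by
  induction h with
  | rel _ _ hs => exact EqvGen.rel _ _ (hf _ _ hs)
  | refl => exact EqvGen.refl _
  | symm _ _ _ ih => exact ih.symm
  | trans _ _ _ _ _ ih1 ih2 => exact ih1.trans _ _ _ ih2

lemma conv_of_red {a b : Tm S C} (h : BetaRed a b) : BetaConv a b := by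
  induction h with
  | refl => exact EqvGen.refl _
  | tail _ hs ih => exact ih.trans _ _ _ (EqvGen.rel _ _ hs)

lemma red_app {M M' N N' : Tm S C} (h1 : BetaRed M M') (h2 : BetaRed N N') :
    BetaRed (Tm.app M N) (Tm.app M' N') :=
  (red_map (fun _ _ s => Step.appL s) h1).trans (red_map (fun _ _ s => Step.appR s) h2)

lemma red_lam {A A' M M' : Tm S C} (h1 : BetaRed A A') (h2 : BetaRed M M') :
    BetaRed (Tm.lam A M) (Tm.lam A' M') :=
  (red_map (fun _ _ s => Step.lamA s) h1).trans (red_map (fun _ _ s => Step.lamM s) h2)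

lemma red_pi {A A' B B' : Tm S C} (h1 : BetaRed A A') (h2 : BetaRed B B') :
    BetaRed (Tm.pi A B) (Tm.pi A' B') :=
  (red_map (fun _ _ s => Step.piA s) h1).trans (red_map (fun _ _ s => Step.piB s) h2)

lemma conv_app_left {M M' : Tm S C} (N : Tm S C) (h : BetaConv M M') :
    BetaConv (Tm.app M N) (Tm.app M' N) :=
  conv_map (fun _ _ s => Step.appL s) h

lemma conv_subst_left {B B' : Tm S C} (k : Nat) (N : Tm S C) (h : BetaConv B B') :
    BetaConv (Tm.subst k N B) (Tm.subst k N B') :=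
  conv_map (fun _ _ s => step_subst_left s k N) h

lemma red_lift {M M' : Tm S C} (d k : Nat) (h : BetaRed M M') :
    BetaRed (M.lift d k) (M'.lift d k) :=
  red_map (fun _ _ s => step_lift s d k) h

lemma conv_lift {M M' : Tm S C} (d k : Nat) (h : BetaConv M M') :
    BetaConv (M.lift d k) (M'.lift d k) :=
  conv_map (fun _ _ s => step_lift s d k) h

lemma red_subst_right {N N' : Tm S C} (hs : Step NoRules N N') (M : Tm S C) (k : Nat) :
    BetaRed (Tm.subst k N M) (Tm.subst k N' M) := by
  induction M generalizing k with
  | var i =>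
      simp only [Tm.subst]; split_ifs
      · exact ReflTransGen.refl
      · exact ReflTransGen.single (step_lift hs k 0)
      · exact ReflTransGen.refl
  | sort s => exact ReflTransGen.refl
  | const c => exact ReflTransGen.refl
  | app m n ih1 ih2 => exact red_app (ih1 k) (ih2 k)
  | lam a m ih1 ih2 => exact red_lam (ih1 k) (ih2 (k+1))
  | pi a b ih1 ih2 => exact red_pi (ih1 k) (ih2 (k+1))

lemma red_subst_right' {N N' : Tm S C} (h : BetaRed N N') (M : Tm S C) (k : Nat) :
    BetaRed (Tm.subst k N M) (Tm.subst k N' M) := by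
  induction h with
  | refl => exact ReflTransGen.refl
  | tail _ hs ih => exact ih.trans (red_subst_right hs M k)

/-- Parallel reduction. -/
inductive Par : Tm S C → Tm S C → Prop
  | sort (s : S) : Par (.sort s) (.sort s)
  | const (c : C) : Par (.const c) (.const c)
  | var (i : Nat) : Par (.var i) (.var i)
  | app {M M' N N'} : Par M M' → Par N N' → Par (.app M N) (.app M' N')
  | lam {A A' M M'} : Par A A' → Par M M' → Par (.lam A M) (.lam A' M')
  | pi {A A' B B'} : Par A A' → Par B B' → Par (.pi A B) (.pi A' B')
  | beta {A M M' N N'} : Par M M' → Par N N' →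
      Par (.app (.lam A M) N) (Tm.subst 0 N' M')

lemma Par.refl (M : Tm S C) : Par M M := by
  induction M with
  | sort s => exact .sort s
  | const c => exact .const c
  | var i => exact .var i
  | app m n ih1 ih2 => exact .app ih1 ih2
  | lam a m ih1 ih2 => exact .lam ih1 ih2
  | pi a b ih1 ih2 => exact .pi ih1 ih2

lemma step_par {M N : Tm S C} (h : Step NoRules M N) : Par M N := by
  induction h with
  | beta => exact Par.beta (Par.refl _) (Par.refl _)
  | rew σ hr => exact hr.elim
  | appL _ ih => exact Par.app ih (Par.refl _)
  | appR _ ih => exact Par.app (Par.refl _) ih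
  | lamA _ ih => exact Par.lam ih (Par.refl _)
  | lamM _ ih => exact Par.lam (Par.refl _) ih
  | piA _ ih => exact Par.pi ih (Par.refl _)
  | piB _ ih => exact Par.pi (Par.refl _) ih

lemma par_red {M N : Tm S C} (h : Par M N) : BetaRed M N := by
  induction h with
  | sort s => exact ReflTransGen.refl
  | const c => exact ReflTransGen.refl
  | var i => exact ReflTransGen.refl
  | app _ _ ih1 ih2 => exact red_app ih1 ih2
  | lam _ _ ih1 ih2 => exact red_lam ih1 ih2
  | pi _ _ ih1 ih2 => exact red_pi ih1 ih2
  | @beta A M M' N N' _ _ ih1 ih2 =>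
      exact (red_app (red_lam ReflTransGen.refl ih1) ih2).tail Step.beta

lemma par_lift {M M' : Tm S C} (h : Par M M') (d k : Nat) :
    Par (M.lift d k) (M'.lift d k) := by
  induction h generalizing k with
  | sort s => exact .sort s
  | const c => exact .const c
  | var i => simp only [Tm.lift]; split_ifs <;> exact Par.refl _
  | app _ _ ih1 ih2 => exact .app (ih1 k) (ih2 k)
  | lam _ _ ih1 ih2 => exact .lam (ih1 k) (ih2 (k+1))
  | pi _ _ ih1 ih2 => exact .pi (ih1 k) (ih2 (k+1))
  | @beta A M M' N N' _ _ ih1 ih2 =>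
      have : (Tm.subst 0 N' M').lift d k
          = Tm.subst 0 (N'.lift d k) (M'.lift d (k+1)) := by
        have := lift_subst_high M' N' 0 k d; simpa using this
      simp only [Tm.lift]; rw [this]
      exact Par.beta (ih1 (k+1)) (ih2 k)

lemma par_subst {M M' N N' : Tm S C} (h : Par M M') (hN : Par N N') (k : Nat) :
    Par (Tm.subst k N M) (Tm.subst k N' M') := by
  induction h generalizing k with
  | sort s => exact .sort s
  | const c => exact .const c
  | var i =>
      simp only [Tm.subst]; split_ifs
      · exact Par.refl _
      · exact par_lift hN k 0
      · exact Par.refl _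
  | app _ _ ih1 ih2 => exact .app (ih1 k) (ih2 k)
  | lam _ _ ih1 ih2 => exact .lam (ih1 k) (ih2 (k+1))
  | pi _ _ ih1 ih2 => exact .pi (ih1 k) (ih2 (k+1))
  | @beta A M M' P P' _ _ ih1 ih2 =>
      have : Tm.subst k N' (Tm.subst 0 P' M')
          = Tm.subst 0 (Tm.subst k N' P') (Tm.subst (k+1) N' M') := by
        have := subst_subst M' N' P' 0 k; simpa using this
      simp only [Tm.subst]; rw [this]
      exact Par.beta (ih1 (k+1)) (ih2 k)

/-- Complete development. -/
def cd : Tm S C → Tm S C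
  | .app (.lam _ M) N => Tm.subst 0 (cd N) (cd M)
  | .app (.app M P) N => .app (cd (.app M P)) (cd N)
  | .app (.sort s) N => .app (.sort s) (cd N)
  | .app (.const c) N => .app (.const c) (cd N)
  | .app (.var i) N => .app (.var i) (cd N)
  | .app (.pi A B) N => .app (cd (.pi A B)) (cd N)
  | .lam A M => .lam (cd A) (cd M)
  | .pi A B => .pi (cd A) (cd B)
  | .sort s => .sort s
  | .const c => .const c
  | .var i => .var i

lemma par_cd {M N : Tm S C} (h : Par M N) : Par N (cd M) := by
  induction h with
  | sort s => exact .sort s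
  | const c => exact .const c
  | var i => exact .var i
  | @app M M' N N' hM hN ihM ihN =>
      cases M with
      | lam A P =>
          cases hM with
          | lam hA hP =>
              rename_i A' P'
              rw [show cd (Tm.app (Tm.lam A P) N) = Tm.subst 0 (cd N) (cd P) from rfl]
              have ihM' : Par (Tm.lam A' P') (Tm.lam (cd A) (cd P)) := by
                simpa [cd] using ihM
              cases ihM' with
              | lam h1 h2 => exact Par.beta h2 ihN
      | sort s => cases hM; exact Par.app ihM ihN
      | const c => cases hM; exact Par.app ihM ihN
      | var i => exact Par.app ihM ihN
      | app P Q => exact Par.app ihM ihN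
      | pi A B => exact Par.app ihM ihN
  | lam _ _ ih1 ih2 => exact Par.lam ih1 ih2
  | pi _ _ ih1 ih2 => exact Par.pi ih1 ih2
  | @beta A P P' Q Q' hP hQ ihP ihQ =>
      exact par_subst (by simpa [cd] using ihP) (by simpa [cd] using ihQ) 0

lemma par_diamond : ∀ a b c : Tm S C, Par a b → Par a c →
    ∃ d, Par b d ∧ Par c d :=
  fun a _ _ h1 h2 => ⟨cd a, par_cd h1, par_cd h2⟩

lemma red_of_parRed {a b : Tm S C} (h : ReflTransGen (@Par S C) a b) : BetaRed a b := by
  induction h with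
  | refl => exact ReflTransGen.refl
  | tail _ hp ih => exact ih.trans (par_red hp)

lemma parRed_of_red {a b : Tm S C} (h : BetaRed a b) : ReflTransGen (@Par S C) a b :=
  ReflTransGen.mono (fun _ _ s => step_par s) _ _ h

lemma beta_confluent : Confluent (@Step S C NoRules) := by
  intro a b c hab hac
  have h := Relation.church_rosser (r := @Par S C)
    (fun a b c h1 h2 => by
      rcases par_diamond a b c h1 h2 with ⟨d, hbd, hcd⟩
      exact ⟨d, ReflGen.single hbd, ReflTransGen.single hcd⟩)
    (parRed_of_red hab) (parRed_of_red hac)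
  rcases h with ⟨d, hbd, hcd⟩
  exact ⟨d, red_of_parRed hbd, red_of_parRed hcd⟩

lemma conv_join {a b : Tm S C} (h : BetaConv a b) :
    ∃ d, BetaRed a d ∧ BetaRed b d := by
  induction h with
  | rel a b hs => exact ⟨b, ReflTransGen.single hs, ReflTransGen.refl⟩
  | refl a => exact ⟨a, ReflTransGen.refl, ReflTransGen.refl⟩
  | symm _ _ _ ih => rcases ih with ⟨d, h1, h2⟩; exact ⟨d, h2, h1⟩
  | trans a b c _ _ ih1 ih2 =>
      rcases ih1 with ⟨d1, had1, hbd1⟩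
      rcases ih2 with ⟨d2, hbd2, hcd2⟩
      rcases beta_confluent b d1 d2 hbd1 hbd2 with ⟨e, h1e, h2e⟩
      exact ⟨e, had1.trans h1e, hcd2.trans h2e⟩

lemma pi_red {A B T : Tm S C} (h : BetaRed (Tm.pi A B) T) :
    ∃ A' B', T = Tm.pi A' B' ∧ BetaRed A A' ∧ BetaRed B B' := by
  induction h with
  | refl => exact ⟨A, B, rfl, ReflTransGen.refl, ReflTransGen.refl⟩
  | tail _ hs ih =>
      rcases ih with ⟨A', B', rfl, h1, h2⟩
      cases step_bstep hs with
      | piA hA => exact ⟨_, B', rfl, h1.tail (bstep_step hA), h2⟩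
      | piB hB => exact ⟨A', _, rfl, h1, h2.tail (bstep_step hB)⟩

lemma conv_pi_inj {A B A' B' : Tm S C} (h : BetaConv (Tm.pi A B) (Tm.pi A' B')) :
    BetaConv A A' ∧ BetaConv B B' := by
  rcases conv_join h with ⟨d, h1, h2⟩
  rcases pi_red h1 with ⟨A1, B1, rfl, hA1, hB1⟩
  rcases pi_red h2 with ⟨A2, B2, heq, hA2, hB2⟩
  cases heq
  exact ⟨(conv_of_red hA1).trans _ _ _ (conv_of_red hA2).symm,
    (conv_of_red hB1).trans _ _ _ (conv_of_red hB2).symm⟩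

end Aux
namespace Aux
open Tm Relation

variable {S : Type} {sp : Spec S}

/-- Custom induction principle for `PTyping` (the `Wf` motive is trivial,
the `const` case is vacuous). -/
theorem typing_ind
    {P : List (Tm S Empty) → Tm S Empty → Tm S Empty → Prop}
    (hvar : ∀ {Γ i A}, PWf sp Γ → Γ[i]? = some A → P Γ (.var i) (A.lift (i+1) 0))
    (hsort : ∀ {Γ s₁ s₂}, PWf sp Γ → sp.ax s₁ s₂ → P Γ (.sort s₁) (.sort s₂))
    (hpi : ∀ {Γ A B s₁ s₂ s₃}, PTyping sp Γ A (.sort s₁) → PTyping sp (A::Γ) B (.sort s₂) →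
      sp.ru s₁ s₂ s₃ → P Γ A (.sort s₁) → P (A::Γ) B (.sort s₂) → P Γ (.pi A B) (.sort s₃))
    (hlam : ∀ {Γ A M B s}, PTyping sp (A::Γ) M B → PTyping sp Γ (.pi A B) (.sort s) →
      P (A::Γ) M B → P Γ (.pi A B) (.sort s) → P Γ (.lam A M) (.pi A B))
    (happ : ∀ {Γ M N A B}, PTyping sp Γ M (.pi A B) → PTyping sp Γ N A →
      P Γ M (.pi A B) → P Γ N A → P Γ (.app M N) (Tm.subst 0 N B))
    (hconv : ∀ {Γ M A B s}, PTyping sp Γ M A → PTyping sp Γ B (.sort s) → BetaConv A B →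
      P Γ M A → P Γ B (.sort s) → P Γ M B)
    {Γ M A} (h : PTyping sp Γ M A) : P Γ M A :=
  Typing.rec (motive_1 := fun _ _ => True) (motive_2 := fun Γ M A _ => P Γ M A)
    trivial (fun _ _ => trivial)
    (fun hw hg _ => hvar hw hg)
    (fun _ hv _ => hv.elim)
    (fun hw hax _ => hsort hw hax)
    (fun h1 h2 h3 ih1 ih2 => hpi h1 h2 h3 ih1 ih2)
    (fun h1 h2 ih1 ih2 => hlam h1 h2 ih1 ih2)
    (fun h1 h2 ih1 ih2 => happ h1 h2 ih1 ih2)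
    (fun h1 h2 h3 ih1 ih2 => hconv h1 h2 h3 ih1 ih2)
    h

lemma typing_wf {Γ M A} (h : PTyping sp Γ M A) : PWf sp Γ := by
  refine typing_ind (P := fun Γ _ _ => PWf sp Γ) ?_ ?_ ?_ ?_ ?_ ?_ h
  · exact fun hw _ => hw
  · exact fun hw _ => hw
  · exact fun _ _ _ ih _ => ih
  · exact fun _ _ _ ih => ih
  · exact fun _ _ ih _ => ih
  · exact fun _ _ _ ih _ => ih

lemma wf_entry {Γ : List (Tm S Empty)} (hw : PWf sp Γ) :
    ∀ i A, Γ[i]? = some A → ∃ s, PTyping sp (Γ.drop (i+1)) A (.sort s) := by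
  induction Γ with
  | nil => intro i A h; simp at h
  | cons B Γ ih =>
      cases hw with
      | cons hB =>
          intro i A h
          cases i with
          | zero =>
              simp only [List.getElem?_cons_zero, List.getElem?_cons_succ] at h
              cases h
              exact ⟨_, by simpa using hB⟩
          | succ i =>
              have := ih (typing_wf hB) i A (by simpa using h)
              simpa using this

lemma gen_pi {Γ A B T} (h : PTyping sp Γ (.pi A B) T) :
    ∃ s₁ s₂ s₃, PTyping sp Γ A (.sort s₁) ∧ PTyping sp (A::Γ) B (.sort s₂) ∧
      sp.ru s₁ s₂ s₃ ∧ BetaConv (Tm.sort s₃) T := by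
  have key : ∀ {Γ M T}, PTyping sp Γ M T → ∀ A B, M = Tm.pi A B →
      ∃ s₁ s₂ s₃, PTyping sp Γ A (.sort s₁) ∧ PTyping sp (A::Γ) B (.sort s₂) ∧
        sp.ru s₁ s₂ s₃ ∧ BetaConv (Tm.sort s₃) T := by
    intro Γ M T h
    refine typing_ind (P := fun Γ M T => ∀ A B, M = Tm.pi A B →
      ∃ s₁ s₂ s₃, PTyping sp Γ A (.sort s₁) ∧ PTyping sp (A::Γ) B (.sort s₂) ∧
        sp.ru s₁ s₂ s₃ ∧ BetaConv (Tm.sort s₃) T) ?_ ?_ ?_ ?_ ?_ ?_ h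
    · rintro _ _ _ _ _ _ _ ⟨⟩
    · rintro _ _ _ _ _ _ _ ⟨⟩
    · rintro Γ A B s₁ s₂ s₃ h1 h2 h3 _ _ A' B' heq
      cases heq
      exact ⟨s₁, s₂, s₃, h1, h2, h3, EqvGen.refl _⟩
    · rintro _ _ _ _ _ _ _ _ _ _ _ ⟨⟩
    · rintro _ _ _ _ _ _ _ _ _ _ _ ⟨⟩
    · rintro Γ M A B s _ _ hcv ih _ A' B' rfl
      rcases ih A' B' rfl with ⟨s₁, s₂, s₃, h1, h2, h3, h4⟩
      exact ⟨s₁, s₂, s₃, h1, h2, h3, h4.trans _ _ _ hcv⟩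
  exact key h A B rfl

lemma gen_lam {Γ A M T} (h : PTyping sp Γ (.lam A M) T) :
    ∃ B s, PTyping sp (A::Γ) M B ∧ PTyping sp Γ (.pi A B) (.sort s) ∧
      BetaConv (Tm.pi A B) T := by
  have key : ∀ {Γ M0 T}, PTyping sp Γ M0 T → ∀ A M, M0 = Tm.lam A M →
      ∃ B s, PTyping sp (A::Γ) M B ∧ PTyping sp Γ (.pi A B) (.sort s) ∧
        BetaConv (Tm.pi A B) T := by
    intro Γ M0 T h
    refine typing_ind (P := fun Γ M0 T => ∀ A M, M0 = Tm.lam A M →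
      ∃ B s, PTyping sp (A::Γ) M B ∧ PTyping sp Γ (.pi A B) (.sort s) ∧
        BetaConv (Tm.pi A B) T) ?_ ?_ ?_ ?_ ?_ ?_ h
    · rintro _ _ _ _ _ _ _ ⟨⟩
    · rintro _ _ _ _ _ _ _ ⟨⟩
    · rintro _ _ _ _ _ _ _ _ _ _ _ _ _ ⟨⟩
    · rintro Γ A M B s h1 h2 _ _ A' M' heq
      cases heq
      exact ⟨B, s, h1, h2, EqvGen.refl _⟩
    · rintro _ _ _ _ _ _ _ _ _ _ _ ⟨⟩
    · rintro Γ M A B s _ _ hcv ih _ A' M' rfl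
      rcases ih A' M' rfl with ⟨B', s', h1, h2, h3⟩
      exact ⟨B', s', h1, h2, h3.trans _ _ _ hcv⟩
  exact key h A M rfl

/-- Lifting a context prefix across an insertion. -/
def liftCtx : List (Tm S Empty) → List (Tm S Empty)
  | [] => []
  | A :: Δ => A.lift 1 Δ.length :: liftCtx Δ

@[simp] lemma liftCtx_length (Δ : List (Tm S Empty)) : (liftCtx Δ).length = Δ.length := by
  induction Δ <;> simp [liftCtx, *]

lemma liftCtx_get {Δ : List (Tm S Empty)} {i : Nat} {A : Tm S Empty} (h : Δ[i]? = some A) :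
    (liftCtx Δ)[i]? = some (A.lift 1 (Δ.length - i - 1)) := by
  induction Δ generalizing i with
  | nil => simp at h
  | cons B Δ ih =>
      cases i with
      | zero => simp only [List.getElem?_cons_zero, List.getElem?_cons_succ] at h; cases h; simp [liftCtx]
      | succ i => simpa [liftCtx] using ih (by simpa using h)

lemma weaken_typing {Γ M A} (h : PTyping sp Γ M A) :
    ∀ Δ Γ₁ (B : Tm S Empty), Γ = Δ ++ Γ₁ → PWf sp (liftCtx Δ ++ B :: Γ₁) →
      PTyping sp (liftCtx Δ ++ B :: Γ₁) (M.lift 1 Δ.length) (A.lift 1 Δ.length) := by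
  refine typing_ind (P := fun Γ M A => ∀ Δ Γ₁ (B : Tm S Empty), Γ = Δ ++ Γ₁ →
      PWf sp (liftCtx Δ ++ B :: Γ₁) →
      PTyping sp (liftCtx Δ ++ B :: Γ₁) (M.lift 1 Δ.length) (A.lift 1 Δ.length))
    ?_ ?_ ?_ ?_ ?_ ?_ h
  · -- var
    intro Γ i A hw hget Δ Γ₁ B hEq hwf'
    subst hEq
    by_cases hi : i < Δ.length
    · have hgetΔ : Δ[i]? = some A := by rwa [List.getElem?_append_left hi] at hget
      have hnew : (liftCtx Δ ++ B :: Γ₁)[i]? = some (A.lift 1 (Δ.length - i - 1)) := by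
        rw [List.getElem?_append_left (by simpa using hi)]
        exact liftCtx_get hgetΔ
      have hv := Typing.var hwf' hnew
      have heq1 : (Tm.var i : Tm S Empty).lift 1 Δ.length = Tm.var i := by
        simp [Tm.lift, hi]
      have heq2 : (A.lift (i+1) 0).lift 1 Δ.length
          = (A.lift 1 (Δ.length - i - 1)).lift (i+1) 0 := by
        have := lift_lift_high (Nat.zero_le (Δ.length - i - 1)) A (i+1) 1
        rw [show Δ.length - i - 1 + (i+1) = Δ.length by omega] at this
        exact this
      rw [heq1, heq2]
      exact hv
    · have hgetΓ₁ : Γ₁[(i - Δ.length)]? = some A := by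
        rw [List.getElem?_append_right (by omega)] at hget; exact hget
      have hnew : (liftCtx Δ ++ B :: Γ₁)[(i+1)]? = some A := by
        rw [List.getElem?_append_right (by simp; omega)]
        simp only [liftCtx_length]
        rw [show i + 1 - Δ.length = (i - Δ.length) + 1 by omega]
        simp only [List.getElem?_cons_zero, List.getElem?_cons_succ]
        exact hgetΓ₁
      have hv := Typing.var hwf' hnew
      have heq1 : (Tm.var i : Tm S Empty).lift 1 Δ.length = Tm.var (i+1) := by
        simp [Tm.lift, show ¬ i < Δ.length by omega]
      have heq2 : (A.lift (i+1) 0).lift 1 Δ.length = A.lift (i+1+1) 0 :=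
        lift_lift_le (Nat.zero_le _) (by omega) A 1
      rw [heq1, heq2]
      exact hv
  · -- sort
    intro Γ s₁ s₂ hw hax Δ Γ₁ B hEq hwf'
    exact Typing.sort hwf' hax
  · -- pi
    intro Γ A B0 s₁ s₂ s₃ h1 h2 h3 ih1 ih2 Δ Γ₁ B hEq hwf'
    subst hEq
    have hA := ih1 Δ Γ₁ B rfl hwf'
    have hB := ih2 (A :: Δ) Γ₁ B rfl (Wf.cons hA)
    exact Typing.pi hA hB h3
  · -- lam
    intro Γ A M B0 s h1 h2 ih1 ih2 Δ Γ₁ B hEq hwf'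
    subst hEq
    have hpi' := ih2 Δ Γ₁ B rfl hwf'
    simp only [Tm.lift] at hpi' ⊢
    rcases gen_pi hpi' with ⟨s₁, _, _, hA', _, _, _⟩
    have hM := ih1 (A :: Δ) Γ₁ B rfl (Wf.cons hA')
    exact Typing.lam hM hpi'
  · -- app
    intro Γ M N A B0 h1 h2 ih1 ih2 Δ Γ₁ B hEq hwf'
    subst hEq
    have hM := ih1 Δ Γ₁ B rfl hwf'
    have hN := ih2 Δ Γ₁ B rfl hwf'
    have heq : (Tm.subst 0 N B0).lift 1 Δ.length
        = Tm.subst 0 (N.lift 1 Δ.length) (B0.lift 1 (Δ.length + 1)) := by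
      have := lift_subst_high B0 N 0 Δ.length 1
      simpa using this
    rw [show (Tm.app M N).lift 1 Δ.length
        = Tm.app (M.lift 1 Δ.length) (N.lift 1 Δ.length) from rfl, heq]
    exact Typing.app (by simpa [Tm.lift] using hM) hN
  · -- conv
    intro Γ M A B0 s h1 h2 hcv ih1 ih2 Δ Γ₁ B hEq hwf'
    subst hEq
    have hM := ih1 Δ Γ₁ B rfl hwf'
    have hB := ih2 Δ Γ₁ B rfl hwf'
    exact Typing.conv hM (by simpa [Tm.lift] using hB) (conv_lift _ _ hcv)

lemma weaken_many {Γ₁ M A} (h : PTyping sp Γ₁ M A) :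
    ∀ Δ, PWf sp (Δ ++ Γ₁) → PTyping sp (Δ ++ Γ₁) (M.lift Δ.length 0) (A.lift Δ.length 0) := by
  intro Δ
  induction Δ with
  | nil => intro _; simpa [lift_zero] using h
  | cons B Δ ih =>
      intro hwf
      have hwf' : PWf sp (Δ ++ Γ₁) := by
        cases hwf with
        | cons hB => exact typing_wf hB
      have h1 := ih hwf'
      have h2 := weaken_typing h1 [] (Δ ++ Γ₁) B rfl (by simpa [liftCtx] using hwf)
      simp only [liftCtx, List.nil_append, List.length_nil] at h2
      have e : ∀ X : Tm S Empty, (X.lift Δ.length 0).lift 1 0 = X.lift (Δ.length + 1) 0 :=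
        fun X => lift_lift_le (Nat.le_refl 0) (Nat.zero_le _) X 1
      rw [e, e] at h2
      simpa using h2

/-- Substituting through a context prefix. -/
def substCtx (N : Tm S Empty) : List (Tm S Empty) → List (Tm S Empty)
  | [] => []
  | A :: Δ => Tm.subst Δ.length N A :: substCtx N Δ

@[simp] lemma substCtx_length (N : Tm S Empty) (Δ : List (Tm S Empty)) :
    (substCtx N Δ).length = Δ.length := by
  induction Δ <;> simp [substCtx, *]

lemma substCtx_get {N : Tm S Empty} {Δ : List (Tm S Empty)} {i A} (h : Δ[i]? = some A) :
    (substCtx N Δ)[i]? = some (Tm.subst (Δ.length - i - 1) N A) := by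
  induction Δ generalizing i with
  | nil => simp at h
  | cons B Δ ih =>
      cases i with
      | zero => simp only [List.getElem?_cons_zero, List.getElem?_cons_succ] at h; cases h; simp [substCtx]
      | succ i => simpa [substCtx] using ih (by simpa using h)

lemma subst_typing {Γ M A} (h : PTyping sp Γ M A) :
    ∀ Δ Γ₁ (B N : Tm S Empty), Γ = Δ ++ B :: Γ₁ → PTyping sp Γ₁ N B →
      PWf sp (substCtx N Δ ++ Γ₁) →
      PTyping sp (substCtx N Δ ++ Γ₁) (Tm.subst Δ.length N M) (Tm.subst Δ.length N A) := by
  refine typing_ind (P := fun Γ M A => ∀ Δ Γ₁ (B N : Tm S Empty), Γ = Δ ++ B :: Γ₁ →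
      PTyping sp Γ₁ N B → PWf sp (substCtx N Δ ++ Γ₁) →
      PTyping sp (substCtx N Δ ++ Γ₁) (Tm.subst Δ.length N M) (Tm.subst Δ.length N A))
    ?_ ?_ ?_ ?_ ?_ ?_ h
  · -- var
    intro Γ i A hw hget Δ Γ₁ B N hEq hN hwf'
    subst hEq
    rcases Nat.lt_trichotomy i Δ.length with hi | hi | hi
    · have hgetΔ : Δ[i]? = some A := by rwa [List.getElem?_append_left hi] at hget
      have hnew : (substCtx N Δ ++ Γ₁)[i]? = some (Tm.subst (Δ.length - i - 1) N A) := by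
        rw [List.getElem?_append_left (by simpa using hi)]
        exact substCtx_get hgetΔ
      have hv := Typing.var hwf' hnew
      have heq1 : Tm.subst Δ.length N (Tm.var i) = Tm.var i := by simp [Tm.subst, hi]
      have heq2 : Tm.subst Δ.length N (A.lift (i+1) 0)
          = (Tm.subst (Δ.length - i - 1) N A).lift (i+1) 0 := by
        have := lift_subst_low (Nat.zero_le (Δ.length - i - 1)) A N (i+1)
        rw [show Δ.length - i - 1 + (i+1) = Δ.length by omega] at this
        exact this.symm
      rw [heq1, heq2]
      exact hv
    · subst hi
      have hgetB : A = B := by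
        rw [List.getElem?_append_right (Nat.le_refl _)] at hget
        simp at hget
        exact hget.symm
      subst hgetB
      have heq1 : Tm.subst Δ.length N (Tm.var Δ.length) = N.lift Δ.length 0 := by
        simp [Tm.subst]
      have heq2 : Tm.subst Δ.length N (A.lift (Δ.length+1) 0) = A.lift Δ.length 0 :=
        subst_lift_cancel (Nat.zero_le _) (by omega) A N
      rw [heq1, heq2]
      have := weaken_many hN (substCtx N Δ) hwf'
      simpa using this
    · have hnew : (substCtx N Δ ++ Γ₁)[(i-1)]? = some A := by
        rw [List.getElem?_append_right (by simp; omega)]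
        simp only [substCtx_length]
        rw [List.getElem?_append_right (by omega)] at hget
        rw [show i - Δ.length = (i - Δ.length - 1) + 1 by omega] at hget
        simp only [List.getElem?_cons_zero, List.getElem?_cons_succ] at hget
        rw [show i - 1 - Δ.length = i - Δ.length - 1 by omega]
        exact hget
      have hv := Typing.var hwf' hnew
      have heq1 : Tm.subst Δ.length N (Tm.var i) = Tm.var (i-1) := by
        simp [Tm.subst, show ¬ i < Δ.length by omega, show ¬ i = Δ.length by omega]
      have heq2 : Tm.subst Δ.length N (A.lift (i+1) 0) = A.lift i 0 := by
        have := subst_lift_cancel (k := 0) (j := Δ.length) (d := i)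
          (Nat.zero_le _) (by omega) A N
        simpa using this
      rw [heq1, heq2]
      rwa [show i - 1 + 1 = i by omega] at hv
  · -- sort
    intro Γ s₁ s₂ hw hax Δ Γ₁ B N hEq hN hwf'
    exact Typing.sort hwf' hax
  · -- pi
    intro Γ A B0 s₁ s₂ s₃ h1 h2 h3 ih1 ih2 Δ Γ₁ B N hEq hN hwf'
    subst hEq
    have hA := ih1 Δ Γ₁ B N rfl hN hwf'
    have hB := ih2 (A :: Δ) Γ₁ B N rfl hN (Wf.cons hA)
    exact Typing.pi hA hB h3
  · -- lam
    intro Γ A M B0 s h1 h2 ih1 ih2 Δ Γ₁ B N hEq hN hwf'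
    subst hEq
    have hpi' := ih2 Δ Γ₁ B N rfl hN hwf'
    simp only [Tm.subst] at hpi' ⊢
    rcases gen_pi hpi' with ⟨s₁, _, _, hA', _, _, _⟩
    have hM := ih1 (A :: Δ) Γ₁ B N rfl hN (Wf.cons hA')
    exact Typing.lam hM hpi'
  · -- app
    intro Γ M N0 A B0 h1 h2 ih1 ih2 Δ Γ₁ B N hEq hN hwf'
    subst hEq
    have hM := ih1 Δ Γ₁ B N rfl hN hwf'
    have hN0 := ih2 Δ Γ₁ B N rfl hN hwf'
    have heq : Tm.subst Δ.length N (Tm.subst 0 N0 B0)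
        = Tm.subst 0 (Tm.subst Δ.length N N0) (Tm.subst (Δ.length + 1) N B0) := by
      have := subst_subst B0 N N0 0 Δ.length
      simpa using this
    rw [show Tm.subst Δ.length N (Tm.app M N0)
        = Tm.app (Tm.subst Δ.length N M) (Tm.subst Δ.length N N0) from rfl, heq]
    exact Typing.app (by simpa [Tm.subst] using hM) hN0
  · -- conv
    intro Γ M A B0 s h1 h2 hcv ih1 ih2 Δ Γ₁ B N hEq hN hwf'
    subst hEq
    have hM := ih1 Δ Γ₁ B N rfl hN hwf'
    have hB := ih2 Δ Γ₁ B N rfl hN hwf'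
    exact Typing.conv hM (by simpa [Tm.subst] using hB) (conv_subst_left _ _ hcv)

lemma subst_typing0 {Γ : List (Tm S Empty)} {M A B N}
    (h : PTyping sp (B :: Γ) M A) (hN : PTyping sp Γ N B) :
    PTyping sp Γ (Tm.subst 0 N M) (Tm.subst 0 N A) := by
  have := subst_typing h [] Γ B N rfl hN (by simpa [substCtx] using typing_wf hN)
  simpa [substCtx] using this

end Aux
namespace Aux
open Tm Relation

variable {S : Type} {sp : Spec S}

lemma drop_len_cons (Δ : List (Tm S Empty)) (A : Tm S Empty) (Γ₁ : List (Tm S Empty)) :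
    (Δ ++ A :: Γ₁).drop (Δ.length + 1) = Γ₁ := by
  induction Δ with
  | nil => simp
  | cons B Δ ih => simpa using ih

lemma ctx_conv {Γ M T} (h : PTyping sp Γ M T) :
    ∀ Δ A A' Γ₁ s, Γ = Δ ++ A :: Γ₁ → BetaConv A A' → PTyping sp Γ₁ A' (.sort s) →
      PWf sp (Δ ++ A' :: Γ₁) → PTyping sp (Δ ++ A' :: Γ₁) M T := by
  refine typing_ind (P := fun Γ M T => ∀ Δ A A' Γ₁ s, Γ = Δ ++ A :: Γ₁ → BetaConv A A' →
      PTyping sp Γ₁ A' (.sort s) → PWf sp (Δ ++ A' :: Γ₁) → PTyping sp (Δ ++ A' :: Γ₁) M T)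
    ?_ ?_ ?_ ?_ ?_ ?_ h
  · -- var
    intro Γ i A0 hw hget Δ A A' Γ₁ s hEq hcv hA' hwf'
    subst hEq
    rcases Nat.lt_trichotomy i Δ.length with hi | hi | hi
    · have hnew : (Δ ++ A' :: Γ₁)[i]? = some A0 := by
        rw [List.getElem?_append_left hi] at hget ⊢; exact hget
      exact Typing.var hwf' hnew
    · subst hi
      have hA0 : A0 = A := by
        rw [List.getElem?_append_right (Nat.le_refl _)] at hget
        simpa using hget.symm
      subst hA0
      have hgetA' : (Δ ++ A' :: Γ₁)[Δ.length]? = some A' := by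
        rw [List.getElem?_append_right (Nat.le_refl _)]; simp
      have hv := Typing.var hwf' hgetA'
      obtain ⟨s₀, hAty⟩ := wf_entry hw Δ.length A0 hget
      rw [drop_len_cons] at hAty
      have hwf'' : PWf sp ((Δ ++ [A']) ++ Γ₁) := by
        rw [List.append_assoc]; simpa using hwf'
      have hw2 := weaken_many hAty (Δ ++ [A']) hwf''
      rw [List.append_assoc] at hw2
      simp only [List.length_append, List.length_singleton, List.singleton_append] at hw2
      have hw3 : PTyping sp (Δ ++ A' :: Γ₁) (Tm.lift (Δ.length+1) 0 A0) (.sort s₀) := by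
        simpa [Tm.lift] using hw2
      exact Typing.conv hv hw3 (conv_lift _ _ (hcv.symm))
    · have hnew : (Δ ++ A' :: Γ₁)[i]? = some A0 := by
        rw [List.getElem?_append_right (by omega)] at hget ⊢
        rw [show i - Δ.length = (i - Δ.length - 1) + 1 by omega] at hget ⊢
        simpa using hget
      exact Typing.var hwf' hnew
  · intro Γ s₁ s₂ hw hax Δ A A' Γ₁ s hEq hcv hA' hwf'
    exact Typing.sort hwf' hax
  · -- pi
    intro Γ A0 B0 s₁ s₂ s₃ h1 h2 h3 ih1 ih2 Δ A A' Γ₁ s hEq hcv hA' hwf'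
    subst hEq
    have hA0 := ih1 Δ A A' Γ₁ s rfl hcv hA' hwf'
    have hB0 := ih2 (A0 :: Δ) A A' Γ₁ s rfl hcv hA' (Wf.cons hA0)
    exact Typing.pi hA0 hB0 h3
  · -- lam
    intro Γ A0 M0 B0 s0 h1 h2 ih1 ih2 Δ A A' Γ₁ s hEq hcv hA' hwf'
    subst hEq
    have hpi' := ih2 Δ A A' Γ₁ s rfl hcv hA' hwf'
    rcases gen_pi hpi' with ⟨s₁, _, _, hA0ty, _, _, _⟩
    have hM0 := ih1 (A0 :: Δ) A A' Γ₁ s rfl hcv hA' (Wf.cons hA0ty)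
    exact Typing.lam hM0 hpi'
  · -- app
    intro Γ M0 N0 A0 B0 h1 h2 ih1 ih2 Δ A A' Γ₁ s hEq hcv hA' hwf'
    subst hEq
    exact Typing.app (ih1 Δ A A' Γ₁ s rfl hcv hA' hwf') (ih2 Δ A A' Γ₁ s rfl hcv hA' hwf')
  · -- conv
    intro Γ M0 A0 B0 s0 h1 h2 hcv0 ih1 ih2 Δ A A' Γ₁ s hEq hcv hA' hwf'
    subst hEq
    exact Typing.conv (ih1 Δ A A' Γ₁ s rfl hcv hA' hwf')
      (ih2 Δ A A' Γ₁ s rfl hcv hA' hwf') hcv0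

lemma type_correct {Γ M T} (h : PTyping sp Γ M T) :
    (∃ s, T = Tm.sort s) ∨ ∃ s, PTyping sp Γ T (.sort s) := by
  refine typing_ind (P := fun Γ _ T => (∃ s, T = Tm.sort s) ∨ ∃ s, PTyping sp Γ T (.sort s))
    ?_ ?_ ?_ ?_ ?_ ?_ h
  · intro Γ i A hw hget
    right
    obtain ⟨s₀, hA⟩ := wf_entry hw i A hget
    have hlen : i < Γ.length := by
      by_contra hc
      push_neg at hc
      rw [List.getElem?_eq_none_iff.mpr (by omega)] at hget
      cases hget
    have hsplit : Γ.take (i+1) ++ Γ.drop (i+1) = Γ := List.take_append_drop _ _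
    have hlen2 : (Γ.take (i+1)).length = i + 1 := by rw [List.length_take]; omega
    have hw2 := weaken_many hA (Γ.take (i+1)) (by rw [hsplit]; exact hw)
    rw [hlen2, hsplit] at hw2
    exact ⟨s₀, by simpa [Tm.lift] using hw2⟩
  · intro Γ s₁ s₂ _ _; exact Or.inl ⟨s₂, rfl⟩
  · intro Γ A B s₁ s₂ s₃ _ _ _ _ _; exact Or.inl ⟨s₃, rfl⟩
  · intro Γ A M B s h1 h2 _ _; exact Or.inr ⟨s, h2⟩
  · intro Γ M N A B h1 h2 ih1 _
    right
    rcases ih1 with ⟨s, hss⟩ | ⟨s, hss⟩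
    · simp at hss
    · rcases gen_pi hss with ⟨s₁, s₂, s₃, hA, hB, _, _⟩
      exact ⟨s₂, by simpa [Tm.subst] using subst_typing0 hB h2⟩
  · intro Γ M A B s h1 h2 _ _ _; exact Or.inr ⟨s, h2⟩

lemma sr_step {Γ M T} (h : PTyping sp Γ M T) :
    ∀ M', Step NoRules M M' → PTyping sp Γ M' T := by
  refine typing_ind (P := fun Γ M T => ∀ M', Step NoRules M M' → PTyping sp Γ M' T)
    ?_ ?_ ?_ ?_ ?_ ?_ h
  · intro Γ i A hw hget M' hs; cases step_bstep hs
  · intro Γ s₁ s₂ hw hax M' hs; cases step_bstep hs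
  · -- pi
    intro Γ A B s₁ s₂ s₃ h1 h2 h3 ih1 ih2 M' hs
    cases step_bstep hs with
    | piA hA =>
        rename_i A'
        have hA' := ih1 _ (bstep_step hA)
        have hB' := ctx_conv h2 [] A A' Γ s₁ rfl (EqvGen.rel _ _ (bstep_step hA)) hA'
          (Wf.cons hA')
        exact Typing.pi hA' (by simpa using hB') h3
    | piB hB => exact Typing.pi h1 (ih2 _ (bstep_step hB)) h3
  · -- lam
    intro Γ A M B s h1 h2 ih1 ih2 M' hs
    cases step_bstep hs with
    | lamA hA =>
        rename_i A'
        have hpi' : PTyping sp Γ (.pi A' B) (.sort s) := ih2 _ (Step.piA (bstep_step hA))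
        rcases gen_pi hpi' with ⟨s₁, _, _, hA'ty, _, _, _⟩
        have hM' := ctx_conv h1 [] A A' Γ s₁ rfl (EqvGen.rel _ _ (bstep_step hA)) hA'ty
          (Wf.cons hA'ty)
        refine Typing.conv (Typing.lam (by simpa using hM') hpi') h2 ?_
        exact (conv_map (fun _ _ st => Step.piA st)
          (EqvGen.rel _ _ (bstep_step hA))).symm
    | lamM hM => exact Typing.lam (ih1 _ (bstep_step hM)) h2
  · -- app
    intro Γ M N A B h1 h2 ih1 ih2 M' hs
    have hBty : ∃ s₂, PTyping sp Γ (Tm.subst 0 N B) (.sort s₂) := by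
      rcases type_correct h1 with ⟨s, hss⟩ | ⟨s, hss⟩
      · simp at hss
      · rcases gen_pi hss with ⟨s₁, s₂, s₃, hA, hB, _, _⟩
        exact ⟨s₂, by simpa [Tm.subst] using subst_typing0 hB h2⟩
    obtain ⟨s₂, hsubB⟩ := hBty
    cases step_bstep hs with
    | beta =>
        rename_i A₀ M₀
        rcases gen_lam h1 with ⟨B₀, s', hM₀, hpi₀, hcv⟩
        rcases conv_pi_inj hcv with ⟨hcA, hcB⟩
        rcases gen_pi hpi₀ with ⟨s₁', _, _, hA₀, hB₀, _, _⟩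
        have hN₀ : PTyping sp Γ N A₀ := Typing.conv h2 hA₀ hcA.symm
        exact Typing.conv (subst_typing0 hM₀ hN₀) hsubB (conv_subst_left 0 N hcB)
    | appL hM => exact Typing.app (ih1 _ (bstep_step hM)) h2
    | appR hN =>
        rename_i N'
        have h2' := ih2 _ (bstep_step hN)
        refine Typing.conv (Typing.app h1 h2') hsubB ?_
        exact (conv_of_red (red_subst_right (bstep_step hN) B 0)).symm
  · -- conv
    intro Γ M A B s h1 h2 hcv ih1 ih2 M' hs
    exact Typing.conv (ih1 _ hs) h2 hcv

lemma sr_red {Γ M M' T} (h : PTyping sp Γ M T) (hr : BetaRed M M') : PTyping sp Γ M' T := by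
  induction hr with
  | refl => exact h
  | tail _ hs ih => exact sr_step ih _ hs

lemma redN_conv (sp : Spec S) (τ : S) :
    ∀ n Γ (M M' A : Tm S Empty), Ht sp τ Γ A n → RedN sp τ n Γ M A →
      PTyping (mc sp τ) Γ M' A → BetaConv M M' → RedN sp τ n Γ M' A := by
  intro n
  induction n using Nat.strong_induction_on with
  | _ n IH =>
  intro Γ M M' A hHt hRed hty hconv
  rw [RedN.eq_def] at hRed ⊢
  obtain ⟨hwf, s, hM, hA, hc1, hc2⟩ := hRed
  refine ⟨hwf, s, hty, hA, ?_, ?_⟩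
  · intro hyp
    obtain ⟨M₀, A₀, hMM₀, hAA₀, h₀⟩ := hc1 hyp
    obtain ⟨D, hMD, hM'D⟩ := conv_join hconv
    obtain ⟨E, hME, hDE⟩ := beta_confluent M M₀ D hMM₀ hMD
    exact ⟨E, A₀, hM'D.trans hDE, hAA₀, sr_red h₀ hME⟩
  · intro hs B C hAeq N hN m hm hHtm
    subst hAeq
    cases hHt with
    | ntau h1 h2 => omega
    | pi hpi hB hC =>
        rename_i m₁ n₁
        have hNB := hN m₁ (by omega) hB
        have hNty : PTyping (mc sp τ) Γ N B := by
          rw [RedN.eq_def] at hNB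
          exact hNB.2.choose_spec.1
        have happ' : PTyping (mc sp τ) Γ (Tm.app M' N) (Tm.subst 0 N C) :=
          Typing.app hty hNty
        have happ := hc2 hs B C rfl N hN m hm hHtm
        exact IH m hm Γ (Tm.app M N) (Tm.app M' N) (Tm.subst 0 N C) hHtm happ happ'
          (conv_app_left N hconv)

end Aux

/-- the reducibility predicate is closed under β-conversion of the
subject. -/
theorem reducible_subject_conv {S : Type} (sp : Spec S) (hfun : sp.Functional)
    (τ : S) (hτ : τ ∉ sp.sorts) {Γ : List (Tm S Empty)} {M M' A : Tm S Empty}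
    (h : Reducible sp τ Γ M A) (h' : PTyping (mc sp τ) Γ M' A)
    (hc : BetaConv M M') : Reducible sp τ Γ M' A := by
  obtain ⟨n, hHt, hRed⟩ := h
  exact ⟨n, hHt, Aux.redN_conv sp τ n Γ M M' A hHt hRed h' hc⟩
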